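/- Let q ∈ ℕ and let f : ℝ^d → ℂ be continuous with (1+|x|)^q |f(x)| ≤ C₁ for all x ∈ ℝ^d and some constant C₁ > 0. Let ρ ∈ 𝒮(ℝ^d) and let α be a multi-index. Then there exists a constant C > 0 such that for all ε ∈ (0,1] and all x ∈ ℝ^d, (1+|x|)^q | ∫_{ℝ^d} f(x−y) (∂^α ρ_ε)(y) dy | ≤ C ε^{-|α|}. -/

import Mathlib

open Set MeasureTheory

/-- The partial derivative of `f` in the `i`-th coordinate direction. -/
noncomputable def coordPDeriv (d : ℕ) (i : Fin d) (f : EuclideanSpace ℝ (Fin d) → ℂ) :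
    EuclideanSpace ℝ (Fin d) → ℂ :=
  fun x => fderiv ℝ f x (EuclideanSpace.single i 1)

/-- The multi-index partial derivative `∂^α f`, where the multi-index `α` is encoded
as the list of coordinate directions in which one differentiates (so `|α| = α.length`). -/
noncomputable def multiPDeriv (d : ℕ) (α : List (Fin d)) (f : EuclideanSpace ℝ (Fin d) → ℂ) :
    EuclideanSpace ℝ (Fin d) → ℂ :=
  α.foldr (coordPDeriv d) f

noncomputable def schwartzMD (d : ℕ) (α : List (Fin d))
    (g : SchwartzMap (EuclideanSpace ℝ (Fin d)) ℂ) : SchwartzMap (EuclideanSpace ℝ (Fin d)) ℂ :=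
  α.foldr (fun i h => LineDeriv.lineDerivOp (EuclideanSpace.single i (1:ℝ)) h) g

lemma multiPDeriv_scale (d : ℕ) (α : List (Fin d))
    (g : SchwartzMap (EuclideanSpace ℝ (Fin d)) ℂ) (c : ℂ) (ε : ℝ) (hε : ε ≠ 0) :
    multiPDeriv d α (fun z => c * g (ε⁻¹ • z)) =
      fun y => c * ((ε⁻¹ : ℝ) ^ α.length : ℝ) * (schwartzMD d α g) (ε⁻¹ • y) := by
  induction α with
  | nil => funext y; simp [multiPDeriv, schwartzMD]
  | cons i α ih =>
    have hstep : multiPDeriv d (i :: α) (fun z => c * g (ε⁻¹ • z)) =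
        coordPDeriv d i (multiPDeriv d α (fun z => c * g (ε⁻¹ • z))) := rfl
    rw [hstep, ih]
    funext x
    set h := schwartzMD d α g with hh
    set c' : ℂ := c * ((ε⁻¹ : ℝ) ^ α.length : ℝ) with hc'
    set L : EuclideanSpace ℝ (Fin d) →L[ℝ] EuclideanSpace ℝ (Fin d) :=
      ε⁻¹ • ContinuousLinearMap.id ℝ (EuclideanSpace ℝ (Fin d)) with hL
    have hLsmul : ∀ y, L y = ε⁻¹ • y := fun y => rfl
    have hL' : HasFDerivAt (fun y : EuclideanSpace ℝ (Fin d) => ε⁻¹ • y) L x := L.hasFDerivAt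
    have hhd : HasFDerivAt (⇑h) (fderiv ℝ h (ε⁻¹ • x)) (ε⁻¹ • x) :=
      (h.differentiable).differentiableAt.hasFDerivAt
    have hcomp : HasFDerivAt (fun y => c' * h (ε⁻¹ • y))
        (c' • ((fderiv ℝ h (ε⁻¹ • x)).comp L)) x := (hhd.comp x hL').const_mul c'
    have : coordPDeriv d i (fun y => c' * h (ε⁻¹ • y)) x
        = c' * (ε⁻¹ • fderiv ℝ h (ε⁻¹ • x) (EuclideanSpace.single i 1)) := by
      rw [coordPDeriv, hcomp.fderiv]
      simp only [ContinuousLinearMap.smul_apply, ContinuousLinearMap.coe_comp', Function.comp_apply,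
        hLsmul, ContinuousLinearMap.map_smul, smul_eq_mul]
    rw [this]
    have hsch : schwartzMD d (i :: α) g =
        LineDeriv.lineDerivOp (EuclideanSpace.single i (1:ℝ)) (schwartzMD d α g) := rfl
    rw [hsch, SchwartzMap.lineDerivOp_apply_eq_fderiv]
    rw [Complex.real_smul]
    simp only [hc']
    push_cast [List.length_cons, pow_succ]
    ring

/-- For `f` continuous with `(1+|x|)^q |f(x)| ≤ C₁` and `ρ` Schwartz,
`(1+|x|)^q |(f ∗ ∂^α ρ_ε)(x)| ≤ C ε^{-|α|}` uniformly in `ε ∈ (0,1]` and `x`. -/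
theorem stmt5 (d q : ℕ) (f : EuclideanSpace ℝ (Fin d) → ℂ) (hf_cont : Continuous f)
    (C₁ : ℝ) (hC₁ : 0 < C₁)
    (hf_bd : ∀ x, (1 + ‖x‖) ^ q * ‖f x‖ ≤ C₁)
    (ρ : SchwartzMap (EuclideanSpace ℝ (Fin d)) ℂ) (α : List (Fin d)) :
    ∃ C > (0:ℝ), ∀ ε ∈ Ioc (0:ℝ) 1, ∀ x,
      (1 + ‖x‖) ^ q *
        ‖∫ y, f (x - y) * multiPDeriv d α (fun z => (((ε ^ d)⁻¹ : ℝ) : ℂ) * ρ (ε⁻¹ • z)) y‖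
        ≤ C * ε ^ (-(α.length : ℝ)) := by
  set G := schwartzMD d α ρ with hG
  set n := α.length with hn
  set H : EuclideanSpace ℝ (Fin d) → ℝ := fun z => (1 + ‖z‖) ^ q * ‖G z‖ with hH
  have hHcont : Continuous H :=
    ((continuous_const.add continuous_norm).pow q).mul G.continuous.norm
  have hHnn : ∀ z, 0 ≤ H z := fun z => by positivity
  have hHint : Integrable H := by
    refine Integrable.mono'
      (((G.integrable.norm).add (G.integrable_pow_mul volume q)).const_mul ((2:ℝ) ^ q))
      hHcont.aestronglyMeasurable ?_
    filter_upwards with z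
    rw [Real.norm_eq_abs, abs_of_nonneg (hHnn z)]
    have hb : (1 + ‖z‖) ^ q ≤ 2 ^ q * (1 + ‖z‖ ^ q) := by
      have h1 : 1 + ‖z‖ ≤ 2 * max 1 ‖z‖ := by
        rcases le_total ‖z‖ 1 with h | h
        · rw [max_eq_left h]; linarith
        · rw [max_eq_right h]; linarith
      have h2 : (1 + ‖z‖) ^ q ≤ (2 * max 1 ‖z‖) ^ q :=
        pow_le_pow_left₀ (by positivity) h1 q
      rw [mul_pow] at h2
      have h3 : (max 1 ‖z‖) ^ q ≤ 1 + ‖z‖ ^ q := by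
        rcases le_total ‖z‖ 1 with h | h
        · rw [max_eq_left h, one_pow]
          have : (0:ℝ) ≤ ‖z‖ ^ q := by positivity
          linarith
        · rw [max_eq_right h]; linarith
      calc (1 + ‖z‖) ^ q ≤ 2 ^ q * (max 1 ‖z‖) ^ q := h2
        _ ≤ 2 ^ q * (1 + ‖z‖ ^ q) := by
            exact mul_le_mul_of_nonneg_left h3 (by positivity)
    calc H z ≤ (2 ^ q * (1 + ‖z‖ ^ q)) * ‖G z‖ :=
          mul_le_mul_of_nonneg_right hb (norm_nonneg _)
      _ = 2 ^ q * (‖G z‖ + ‖z‖ ^ q * ‖G z‖) := by ring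
  set I := ∫ z, H z with hIdef
  have hI0 : 0 ≤ I := integral_nonneg hHnn
  refine ⟨C₁ * (I + 1), by positivity, ?_⟩
  rintro ε ⟨hε0, hε1⟩ x
  have hεne : ε ≠ 0 := ne_of_gt hε0
  have hεinv1 : (1:ℝ) ≤ ε⁻¹ := by
    rw [le_inv_comm₀ one_pos hε0]; simpa using hε1
  simp only [multiPDeriv_scale d α ρ _ ε hεne, ← hG, ← hn]
  have hrpow : ε ^ (-(n:ℝ)) = ε⁻¹ ^ n := by
    rw [Real.rpow_neg hε0.le, Real.rpow_natCast, inv_pow]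
  have hnorm : ∀ y : EuclideanSpace ℝ (Fin d),
      ‖f (x - y) * ((((ε ^ d)⁻¹ : ℝ) : ℂ) * ((ε⁻¹ ^ n : ℝ) : ℂ) * G (ε⁻¹ • y))‖
        = (ε ^ d)⁻¹ * ε⁻¹ ^ n * (‖f (x - y)‖ * ‖G (ε⁻¹ • y)‖) := by
    intro y
    rw [norm_mul, norm_mul, norm_mul, Complex.norm_real, Complex.norm_real,
      Real.norm_eq_abs, Real.norm_eq_abs, abs_of_pos (by positivity),
      abs_of_pos (by positivity)]
    ring
  have key : ∀ y : EuclideanSpace ℝ (Fin d),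
      (1 + ‖x‖) ^ q * (‖f (x - y)‖ * ‖G (ε⁻¹ • y)‖) ≤ C₁ * H (ε⁻¹ • y) := by
    intro y
    have h1 : ‖x‖ ≤ ‖x - y‖ + ‖y‖ := by
      calc ‖x‖ = ‖(x - y) + y‖ := by rw [sub_add_cancel]
        _ ≤ ‖x - y‖ + ‖y‖ := norm_add_le _ _
    have h2 : ‖y‖ ≤ ‖ε⁻¹ • y‖ := by
      rw [norm_smul, Real.norm_eq_abs, abs_of_pos (inv_pos.2 hε0)]
      nlinarith [norm_nonneg y]
    have hA : (1 + ‖x‖) ^ q ≤ (1 + ‖x - y‖) ^ q * (1 + ‖ε⁻¹ • y‖) ^ q := by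
      rw [← mul_pow]
      refine pow_le_pow_left₀ (by positivity) ?_ q
      nlinarith [norm_nonneg (x - y), norm_nonneg y, norm_nonneg (ε⁻¹ • y)]
    calc (1 + ‖x‖) ^ q * (‖f (x - y)‖ * ‖G (ε⁻¹ • y)‖)
        ≤ ((1 + ‖x - y‖) ^ q * (1 + ‖ε⁻¹ • y‖) ^ q) * (‖f (x - y)‖ * ‖G (ε⁻¹ • y)‖) := by
          exact mul_le_mul_of_nonneg_right hA (by positivity)
      _ = ((1 + ‖x - y‖) ^ q * ‖f (x - y)‖) * ((1 + ‖ε⁻¹ • y‖) ^ q * ‖G (ε⁻¹ • y)‖) := by ring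
      _ ≤ C₁ * H (ε⁻¹ • y) :=
          mul_le_mul (hf_bd _) le_rfl (by positivity) hC₁.le
  have hint2 : Integrable (fun y : EuclideanSpace ℝ (Fin d) =>
      (ε ^ d)⁻¹ * ε⁻¹ ^ n * (C₁ * H (ε⁻¹ • y))) :=
    ((hHint.comp_smul (inv_ne_zero hεne)).const_mul C₁).const_mul _
  have hCoV : ∫ y : EuclideanSpace ℝ (Fin d), H (ε⁻¹ • y) = ε ^ d * I := by
    rw [MeasureTheory.Measure.integral_comp_inv_smul volume H ε]
    simp [finrank_euclideanSpace_fin, abs_of_pos (pow_pos hε0 d), smul_eq_mul, hIdef]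
  calc (1 + ‖x‖) ^ q *
        ‖∫ y, f (x - y) * ((((ε ^ d)⁻¹ : ℝ) : ℂ) * ((ε⁻¹ ^ n : ℝ) : ℂ) * G (ε⁻¹ • y))‖
      ≤ (1 + ‖x‖) ^ q *
        ∫ y, ‖f (x - y) * ((((ε ^ d)⁻¹ : ℝ) : ℂ) * ((ε⁻¹ ^ n : ℝ) : ℂ) * G (ε⁻¹ • y))‖ := by
        exact mul_le_mul_of_nonneg_left (norm_integral_le_integral_norm _) (by positivity)
    _ = ∫ y, (1 + ‖x‖) ^ q *
        ‖f (x - y) * ((((ε ^ d)⁻¹ : ℝ) : ℂ) * ((ε⁻¹ ^ n : ℝ) : ℂ) * G (ε⁻¹ • y))‖ :=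
        (integral_const_mul _ _).symm
    _ ≤ ∫ y, (ε ^ d)⁻¹ * ε⁻¹ ^ n * (C₁ * H (ε⁻¹ • y)) := by
        refine integral_mono_of_nonneg (Filter.Eventually.of_forall fun y => by positivity)
          hint2 (Filter.Eventually.of_forall fun y => ?_)
        dsimp only
        rw [hnorm y]
        calc (1 + ‖x‖) ^ q * ((ε ^ d)⁻¹ * ε⁻¹ ^ n * (‖f (x - y)‖ * ‖G (ε⁻¹ • y)‖))
            = (ε ^ d)⁻¹ * ε⁻¹ ^ n * ((1 + ‖x‖) ^ q * (‖f (x - y)‖ * ‖G (ε⁻¹ • y)‖)) := by ring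
          _ ≤ (ε ^ d)⁻¹ * ε⁻¹ ^ n * (C₁ * H (ε⁻¹ • y)) :=
            mul_le_mul_of_nonneg_left (key y) (by positivity)
    _ = (ε ^ d)⁻¹ * ε⁻¹ ^ n * (C₁ * ∫ y, H (ε⁻¹ • y)) := by
        rw [integral_const_mul, integral_const_mul]
    _ = C₁ * I * ε⁻¹ ^ n := by
        rw [hCoV]; field_simp
    _ ≤ C₁ * (I + 1) * ε ^ (-(n:ℝ)) := by
        rw [hrpow]
        have : (0:ℝ) ≤ ε⁻¹ ^ n := by positivity
        nlinarith
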